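/- Let a > 0 and b ∈ ℝ, and consider the open set Ω := {(h,m) ∈ ℝ² : m > 0 and m²a² − h² − m⁴a²b² > 0}. Define ψ : Ω → ℝ² by ψ(h,m) := (√(m²a² − h² − m⁴a²b²)/(m²a²), h/(m²a²)). Then at every (h,m) ∈ Ω, the Jacobian determinant det[[∂ψ₁/∂h, ∂ψ₁/∂m],[∂ψ₂/∂h, ∂ψ₂/∂m]] equals 1/(m³·a²·√(m²a² − h² − m⁴a²b²)); in particular it is nonzero, so ψ is a local diffeomorphism at every point of Ω. -/

import Mathlib

noncomputable section

open Real

/-- First component of `ψ`: the limiting normal curvature `√(m²a² − h² − m⁴a²b²)/(m²a²)`. -/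
def psi1 (a b : ℝ) (h m : ℝ) : ℝ :=
  Real.sqrt (m ^ 2 * a ^ 2 - h ^ 2 - m ^ 4 * a ^ 2 * b ^ 2) / (m ^ 2 * a ^ 2)

/-- Second component of `ψ`: the cusp-directional torsion `h/(m²a²)`. -/
def psi2 (a : ℝ) (h m : ℝ) : ℝ := h / (m ^ 2 * a ^ 2)

/-- On `Ω = {(h,m) : m > 0, m²a² − h² − m⁴a²b² > 0}`, the Jacobian determinant of
`ψ = (ψ₁, ψ₂)` equals `1/(m³a²√(m²a² − h² − m⁴a²b²))`; in particular it is nonzero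
(so `ψ` is a local diffeomorphism at every point of `Ω`). -/
theorem stmt8 (a b : ℝ) (ha : 0 < a) :
    ∀ h m : ℝ, 0 < m → 0 < m ^ 2 * a ^ 2 - h ^ 2 - m ^ 4 * a ^ 2 * b ^ 2 →
      deriv (fun h' => psi1 a b h' m) h * deriv (fun m' => psi2 a h m') m
          - deriv (fun m' => psi1 a b h m') m * deriv (fun h' => psi2 a h' m) h
        = 1 / (m ^ 3 * a ^ 2 * Real.sqrt (m ^ 2 * a ^ 2 - h ^ 2 - m ^ 4 * a ^ 2 * b ^ 2))
      ∧ deriv (fun h' => psi1 a b h' m) h * deriv (fun m' => psi2 a h m') m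
          - deriv (fun m' => psi1 a b h m') m * deriv (fun h' => psi2 a h' m) h ≠ 0 := by
  intro h m hm hD
  set D : ℝ := m ^ 2 * a ^ 2 - h ^ 2 - m ^ 4 * a ^ 2 * b ^ 2 with hDdef
  have hsD : 0 < Real.sqrt D := Real.sqrt_pos.mpr hD
  have hDne : D ≠ 0 := ne_of_gt hD
  have hmne : m ≠ 0 := ne_of_gt hm
  have hane : a ≠ 0 := ne_of_gt ha
  have hma : m ^ 2 * a ^ 2 ≠ 0 := by positivity
  -- derivative of psi1 in h
  have d1h : HasDerivAt (fun h' => psi1 a b h' m)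
      ((-(2 * h)) / (2 * Real.sqrt D) / (m ^ 2 * a ^ 2)) h := by
    have hg : HasDerivAt (fun h' : ℝ => m ^ 2 * a ^ 2 - h' ^ 2 - m ^ 4 * a ^ 2 * b ^ 2)
        (-(2 * h)) h := by
      have := ((hasDerivAt_pow 2 h).const_sub (m ^ 2 * a ^ 2)).sub_const (m ^ 4 * a ^ 2 * b ^ 2)
      simpa using this
    exact (hg.sqrt hDne).div_const _
  -- derivative of psi2 in h
  have d2h : HasDerivAt (fun h' => psi2 a h' m) (1 / (m ^ 2 * a ^ 2)) h := by
    simp only [psi2]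
    exact (hasDerivAt_id h).div_const (m ^ 2 * a ^ 2)
  -- derivative of psi2 in m
  have d2m : HasDerivAt (fun m' => psi2 a h m')
      ((0 * (m ^ 2 * a ^ 2) - h * (2 * m * a ^ 2)) / (m ^ 2 * a ^ 2) ^ 2) m := by
    have hden : HasDerivAt (fun m' : ℝ => m' ^ 2 * a ^ 2) (2 * m * a ^ 2) m := by
      simpa [mul_comm] using (hasDerivAt_pow 2 m).mul_const (a ^ 2)
    exact (hasDerivAt_const m h).div hden hma
  -- derivative of psi1 in m
  have d1m : HasDerivAt (fun m' => psi1 a b h m')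
      (((2 * m * a ^ 2 - 4 * m ^ 3 * a ^ 2 * b ^ 2) / (2 * Real.sqrt D) * (m ^ 2 * a ^ 2)
          - Real.sqrt D * (2 * m * a ^ 2)) / (m ^ 2 * a ^ 2) ^ 2) m := by
    have hg : HasDerivAt (fun m' : ℝ => m' ^ 2 * a ^ 2 - h ^ 2 - m' ^ 4 * a ^ 2 * b ^ 2)
        (2 * m * a ^ 2 - 4 * m ^ 3 * a ^ 2 * b ^ 2) m := by
      have h1 : HasDerivAt (fun m' : ℝ => m' ^ 2 * a ^ 2) (2 * m * a ^ 2) m := by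
        simpa [mul_comm] using (hasDerivAt_pow 2 m).mul_const (a ^ 2)
      have h2 : HasDerivAt (fun m' : ℝ => m' ^ 4 * a ^ 2 * b ^ 2) (4 * m ^ 3 * a ^ 2 * b ^ 2) m := by
        have := ((hasDerivAt_pow 4 m).mul_const (a ^ 2)).mul_const (b ^ 2)
        simpa [mul_comm, mul_assoc, mul_left_comm] using this
      exact (h1.sub_const (h ^ 2)).sub h2
    have hden : HasDerivAt (fun m' : ℝ => m' ^ 2 * a ^ 2) (2 * m * a ^ 2) m := by
      simpa [mul_comm] using (hasDerivAt_pow 2 m).mul_const (a ^ 2)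
    have hDm : (fun m' : ℝ => m' ^ 2 * a ^ 2 - h ^ 2 - m' ^ 4 * a ^ 2 * b ^ 2) m ≠ 0 := by
      simpa [hDdef] using hDne
    exact ((hg.sqrt hDm).div hden hma)
  have key : deriv (fun h' => psi1 a b h' m) h * deriv (fun m' => psi2 a h m') m
      - deriv (fun m' => psi1 a b h m') m * deriv (fun h' => psi2 a h' m) h
      = 1 / (m ^ 3 * a ^ 2 * Real.sqrt D) := by
    rw [d1h.deriv, d2h.deriv, d2m.deriv, d1m.deriv]
    have hsq : Real.sqrt D * Real.sqrt D = D := Real.mul_self_sqrt hD.le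
    have hsne : Real.sqrt D ≠ 0 := ne_of_gt hsD
    have h2 : Real.sqrt D ^ 2 = D := Real.sq_sqrt hD.le
    have h3 : Real.sqrt D ^ 3 = D * Real.sqrt D := by
      rw [pow_succ, h2]
    have h4 : Real.sqrt D ^ 4 = D ^ 2 := by
      rw [show (4:ℕ) = 2*2 from rfl, pow_mul, h2]
    field_simp
    ring_nf
    rw [h2, hDdef]
    ring
  refine ⟨key, ?_⟩
  rw [key]
  positivity

end
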